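/- arXiv:2005.12709 — 2 statements merged into one kernel-verified Lean document; each statement's English description precedes it below -/
import Mathlib

section
/- For the equilateral convex pentagon of family (3) with n = 5, the parameter θ satisfies cos θ = 3/(4 sin 72°), and this θ lies strictly between 90° − 360°/5 = 18° and 90°, so the equilateral pentagon with n = 5 is genuinely convex. -/
open Real

/-- For the equilateral pentagon of family (3) with n = 5, the parameter θ (with
cos θ = 3/(4 sin(2π/5))) lies strictly between π/2 − 2π/5 (= 18°) and π/2, so the
equilateral pentagon with n = 5 is genuinely convex. -/
theorem equilateral_n5_convex (θ : ℝ) (hθ : θ ∈ Set.Ioo 0 π)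
    (h : Real.cos θ = 3 / (4 * Real.sin (2 * π / 5))) :
    π / 2 - 2 * π / 5 < θ ∧ θ < π / 2 := by
  obtain ⟨h0, hπ⟩ := hθ
  have hpi := Real.pi_pos
  have hs : Real.sqrt 3 / 2 < Real.sin (2 * π / 5) := by
    have : Real.sin (π / 3) < Real.sin (2 * π / 5) := by
      apply Real.sin_lt_sin_of_lt_of_le_pi_div_two (by linarith) (by linarith) (by linarith)
    rwa [Real.sin_pi_div_three] at this
  have hs3 : (0:ℝ) < Real.sqrt 3 := Real.sqrt_pos.mpr (by norm_num)
  have hs0 : 0 < Real.sin (2 * π / 5) := by linarith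
  have hsq : Real.sqrt 3 ^ 2 = 3 := Real.sq_sqrt (by norm_num)
  have hlt : 3 / (4 * Real.sin (2 * π / 5)) < Real.sin (2 * π / 5) := by
    rw [div_lt_iff₀ (by positivity)]
    nlinarith
  have hcospos : 0 < Real.cos θ := by rw [h]; positivity
  constructor
  · -- π/2 - 2π/5 < θ
    have heq : Real.cos (π / 2 - 2 * π / 5) = Real.sin (2 * π / 5) := Real.cos_pi_div_two_sub _
    have hcos : Real.cos θ < Real.cos (π / 2 - 2 * π / 5) := by rw [heq, h]; exact hlt
    by_contra hcon
    push_neg at hcon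
    have := Real.cos_le_cos_of_nonneg_of_le_pi (by linarith) (by linarith) hcon
    linarith
  · by_contra hcon
    push_neg at hcon
    have := Real.cos_nonpos_of_pi_div_two_le_of_le hcon (by linarith)
    linarith
end

section
/- For the equilateral pentagon of family (3) with n = 7, the parameter θ satisfies cos θ = 3/(4 sin(360°/7)), and this θ is strictly less than 90° − 360°/7; hence the equilateral pentagon with n = 7 is concave (E > 180°). -/
open Real

/-- For the equilateral pentagon of family (3) with n = 7, the parameter θ (with
cos θ = 3/(4 sin(2π/7))) is strictly less than π/2 − 2π/7, hence the equilateral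
pentagon with n = 7 is concave (E > π). -/
theorem equilateral_n7_concave (θ : ℝ) (hθ : θ ∈ Set.Ioo 0 π)
    (h : Real.cos θ = 3 / (4 * Real.sin (2 * π / 7))) :
    θ < π / 2 - 2 * π / 7 := by
  have hpi := Real.pi_pos
  set s := Real.sin (2 * π / 7) with hs
  have hspos : 0 < s := Real.sin_pos_of_pos_of_lt_pi (by linarith) (by linarith)
  have hslt : s < Real.sqrt 3 / 2 := by
    have : s < Real.sin (π / 3) := by
      apply Real.sin_lt_sin_of_lt_of_le_pi_div_two (by linarith) (by linarith)
      linarith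
    rwa [Real.sin_pi_div_three] at this
  have hsq : s ^ 2 < 3 / 4 := by
    have h3 : Real.sqrt 3 ^ 2 = 3 := Real.sq_sqrt (by norm_num)
    nlinarith [Real.sqrt_nonneg 3]
  have hgt : s < 3 / (4 * s) := by
    rw [lt_div_iff₀ (by positivity)]
    nlinarith
  have hcos : Real.cos (π / 2 - 2 * π / 7) < Real.cos θ := by
    rw [h, show π / 2 - 2 * π / 7 = π / 2 - 2 * π / 7 by ring,
      Real.cos_pi_div_two_sub]
    -- careful: π/2 - 2*π/7 parses as (π/2 - 2*π)/7? no, standard precedence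
    exact hgt
  by_contra hle
  push_neg at hle
  have := Real.cos_le_cos_of_nonneg_of_le_pi (by linarith) (le_of_lt hθ.2) hle
  linarith
end
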